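/- Fix a natural number s ≥ 1. Then (S(n,s) + 1/2)·s!/(2^{s−1}·n^s) tends to 1 as n → ∞; equivalently, the function n ↦ S(n,s) + 1/2 is asymptotically equivalent to n ↦ 2^{s−1}·n^s/s! as n → ∞. -/

import Mathlib

open Filter Finset

private lemma inv_nat_tendsto : Filter.Tendsto (fun n : ℕ => ((n:ℝ))⁻¹) Filter.atTop (nhds 0) :=
  tendsto_inv_atTop_zero.comp tendsto_natCast_atTop_atTop

private lemma descFactorial_ratio (q : ℕ) :
    Filter.Tendsto (fun n : ℕ => (n.descFactorial q : ℝ) / (n:ℝ)^q) Filter.atTop (nhds 1) := by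
  have h : ∀ i : ℕ, Filter.Tendsto (fun n : ℕ => ((n - i : ℕ) : ℝ) / (n:ℝ)) Filter.atTop (nhds 1) := by
    intro i
    have h1 : Filter.Tendsto (fun n : ℕ => 1 - (i:ℝ) * ((n:ℝ))⁻¹) Filter.atTop (nhds 1) := by
      have h2 := inv_nat_tendsto.const_mul (i:ℝ)
      simpa using tendsto_const_nhds.sub h2
    refine h1.congr' ?_
    filter_upwards [eventually_ge_atTop (i+1)] with n hn
    have hnpos : (0:ℝ) < n := by
      have : (1:ℕ) ≤ n := by omega
      exact_mod_cast Nat.lt_of_lt_of_le Nat.zero_lt_one this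
    rw [Nat.cast_sub (by omega)]
    field_simp
  have hp := tendsto_finset_prod (Finset.range q) (fun i _ => h i)
  simp only [Finset.prod_const_one] at hp
  refine hp.congr (fun n => ?_)
  rw [Nat.descFactorial_eq_prod_range]
  push_cast
  rw [Finset.prod_div_distrib, Finset.prod_const, Finset.card_range]

private lemma choose_ratio (q : ℕ) :
    Filter.Tendsto (fun n : ℕ => (Nat.choose n q : ℝ) * (Nat.factorial q : ℝ) / (n:ℝ)^q)
      Filter.atTop (nhds 1) := by
  refine (descFactorial_ratio q).congr (fun n => ?_)
  rw [mul_comm ((Nat.choose n q : ℝ)), ← Nat.cast_mul, ← Nat.descFactorial_eq_factorial_mul_choose]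

/-- Formula (assym1) of the paper's Theorem 2: for fixed `s ≥ 1`,
`S(n,s) + 1/2 ∼ 2^(s-1) n^s / s!` as `n → ∞`. -/
theorem S_asymptotic (s : ℕ) (hs : 1 ≤ s) :
    Filter.Tendsto
      (fun n : ℕ =>
        ((-(1 / 2 : ℝ) + ∑ q ∈ Finset.range (s + 1),
            (2 : ℝ) ^ ((q : ℤ) - 1) * (Nat.choose s q : ℝ) * (Nat.choose n q : ℝ)) + 1 / 2) *
          (Nat.factorial s : ℝ) / ((2 : ℝ) ^ ((s : ℤ) - 1) * (n : ℝ) ^ s))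
      Filter.atTop (nhds 1) := by
  have key : ∀ q ∈ Finset.range (s+1),
      Filter.Tendsto (fun n : ℕ =>
        (2 : ℝ) ^ ((q : ℤ) - 1) * (Nat.choose s q : ℝ) * (Nat.choose n q : ℝ) *
          (Nat.factorial s : ℝ) / ((2 : ℝ) ^ ((s : ℤ) - 1) * (n : ℝ) ^ s))
        Filter.atTop (nhds (if q = s then 1 else 0)) := by
    intro q hq
    rw [Finset.mem_range] at hq
    by_cases hqs : q = s
    · subst hqs
      simp only [if_pos rfl, Nat.choose_self, Nat.cast_one]
      have := choose_ratio q
      refine this.congr' ?_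
      filter_upwards [eventually_ge_atTop 1] with n hn
      have h2 : ((2:ℝ) ^ ((q:ℤ)-1)) ≠ 0 := by positivity
      have hn' : ((n:ℝ))^q ≠ 0 := by
        have : (0:ℝ) < n := by exact_mod_cast hn
        positivity
      field_simp
    · have hq' : q < s := by omega
      rw [if_neg hqs]
      -- term = c * (choose n q * q! / n^q) * (n^q/n^s)
      have hc : Filter.Tendsto (fun n : ℕ => ((n:ℝ))^((q:ℤ) - (s:ℤ))) Filter.atTop (nhds 0) := by
        have hneg : (q:ℤ) - (s:ℤ) < 0 := by omega
        exact (tendsto_zpow_atTop_zero hneg).comp tendsto_natCast_atTop_atTop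
      have hmain := ((choose_ratio q).mul hc).const_mul
        ((2 : ℝ) ^ ((q : ℤ) - 1) * (Nat.choose s q : ℝ) * (Nat.factorial s : ℝ) /
          ((2 : ℝ) ^ ((s : ℤ) - 1) * (Nat.factorial q : ℝ)))
      simp only [mul_zero, mul_one] at hmain
      refine hmain.congr' ?_
      filter_upwards [eventually_ge_atTop 1] with n hn
      have hnpos : (0:ℝ) < n := by exact_mod_cast Nat.lt_of_lt_of_le Nat.zero_lt_one hn
      have hzs : ((n:ℝ))^((q:ℤ) - (s:ℤ)) = (n:ℝ)^q / (n:ℝ)^s := by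
        rw [zpow_sub₀ (ne_of_gt hnpos), zpow_natCast, zpow_natCast]
      rw [hzs]
      have hq0 : (Nat.factorial q : ℝ) ≠ 0 := by positivity
      have h2 : ((2:ℝ) ^ ((s:ℤ)-1)) ≠ 0 := by positivity
      field_simp
  have hsum := tendsto_finset_sum (Finset.range (s+1)) key
  have hone : (∑ q ∈ Finset.range (s+1), if q = s then (1:ℝ) else 0) = 1 := by
    rw [Finset.sum_ite_eq' (Finset.range (s+1)) s (fun _ => (1:ℝ))]
    simp
  rw [hone] at hsum
  refine hsum.congr (fun n => ?_)
  rw [← Finset.sum_div, ← Finset.sum_mul]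
  ring_nf
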